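/- Let G be an abelian group with finite injective rank. Then G is co-finitely Hopfian if and only if G is divisible of finite rank (equivalently, since such G is torsion-free, G ≅ ℚ^n for some n < ω). -/

import Mathlib

open TensorProduct

/-- An abelian group `G` has *finite injective rank* if an endomorphism `φ` of `G`
is injective exactly when the quotient `G / φ(G)` is finite. -/
def FiniteInjectiveRank (G : Type*) [AddCommGroup G] : Prop :=
  ∀ φ : G →+ G, Function.Injective φ ↔ Finite (G ⧸ φ.range)

/-- An abelian group `G` is *co-finitely Hopfian* if every endomorphism `φ` of `G`
with `G / φ(G)` finite is surjective. -/
def CoFinitelyHopfian (G : Type*) [AddCommGroup G] : Prop :=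
  ∀ φ : G →+ G, Finite (G ⧸ φ.range) → Function.Surjective φ

section Helpers

variable {G : Type*} [AddCommGroup G]

/-- multiplication by an integer as an `AddMonoidHom`. -/
def zsmulHom (n : ℤ) : G →+ G :=
  AddMonoidHom.mk' (fun g => n • g) (fun a b => smul_add n a b)

@[simp] lemma zsmulHom_apply (n : ℤ) (g : G) : zsmulHom n g = n • g := rfl

lemma mem_zsmulHom_range {n : ℤ} {g : G} :
    g ∈ (zsmulHom (G := G) n).range ↔ ∃ w : G, n • w = g := Iff.rfl

/-- Extension of homomorphisms into a divisible group. -/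
lemma ext_divisible {G Q : Type u} [AddCommGroup G] [AddCommGroup Q]
    (hdiv : ∀ n : ℤ, n ≠ 0 → ∀ q : Q, ∃ q', n • q' = q)
    (H : AddSubgroup G) (f : H →+ Q) :
    ∃ F : G →+ Q, ∀ h : H, F h = f h := by
  letI : DivisibleBy Q ℤ :=
    { div := fun q n => if hn : n = 0 then 0 else (hdiv n hn q).choose
      div_zero := fun q => by simp
      div_cancel := fun {n} q hn => by
        simpa [hn] using (hdiv n hn q).choose_spec }
  have hBaer : Module.Baer ℤ Q := Module.Baer.of_divisible Q
  have hinj : Module.Injective ℤ Q := hBaer.injective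
  obtain ⟨F, hF⟩ := hinj.out (X := H) (Y := G) H.subtype.toIntLinearMap
    (by exact Subtype.coe_injective) f.toIntLinearMap
  exact ⟨F.toAddMonoidHom, fun h => hF h⟩

/-- A homomorphism defined on the cyclic subgroup generated by `y`. -/
lemma hom_on_zmultiples {A : Type*} [AddCommGroup A] (y : G) (a : A)
    (hcomp : ∀ k : ℤ, k • y = 0 → k • a = 0) :
    ∃ f : (AddSubgroup.zmultiples y) →+ A,
      f ⟨y, AddSubgroup.mem_zmultiples y⟩ = a := by
  have hmem : ∀ h : AddSubgroup.zmultiples y, ∃ k : ℤ, k • y = (h : G) := by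
    rintro ⟨h, k, rfl⟩; exact ⟨k, rfl⟩
  have key : ∀ (k k' : ℤ), k • y = k' • y → k • a = k' • a := by
    intro k k' hkk
    have : (k - k') • y = 0 := by rw [sub_smul, hkk, sub_self]
    have := hcomp _ this
    rw [sub_smul, sub_eq_zero] at this
    exact this
  refine ⟨{ toFun := fun h => (hmem h).choose • a, map_zero' := ?_, map_add' := ?_ }, ?_⟩
  · show (hmem 0).choose • a = 0
    rw [show (0:A) = (0:ℤ) • a by simp]
    exact key _ 0 (by simpa using (hmem 0).choose_spec)
  · intro h₁ h₂
    have h1 := (hmem h₁).choose_spec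
    have h2 := (hmem h₂).choose_spec
    have h12 := (hmem (h₁ + h₂)).choose_spec
    rw [← add_smul]
    refine key _ _ ?_
    rw [h12, add_smul, h1, h2]; rfl
  · show (hmem _).choose • a = a
    have := key _ 1 (by simpa using (hmem ⟨y, AddSubgroup.mem_zmultiples y⟩).choose_spec)
    simpa using this

end Helpers

section StarCase

variable {G : Type u} [AddCommGroup G]

lemma addCircle_div : ∀ n : ℤ, n ≠ 0 → ∀ q : ULift.{v} (AddCircle (1:ℚ)),
    ∃ q', n • q' = q := by
  haveI : Fact ((0:ℚ) < 1) := ⟨one_pos⟩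
  intro n hn q
  exact ⟨ULift.up (DivisibleBy.div q.down n), by
    have := DivisibleBy.div_cancel q.down hn
    apply ULift.ext
    simpa using this⟩

lemma star_case (h : FiniteInjectiveRank G) (m : ℕ) (hm : 1 < m) (y : G)
    (hy : (m : ℤ) • y = 0)
    (hord : ∀ k : ℤ, k • y ∈ (zsmulHom (G := G) (m:ℤ)).range → (m:ℤ) ∣ k) : False := by
  haveI : NeZero m := ⟨by omega⟩
  haveI : Fact ((0:ℚ) < 1) := ⟨one_pos⟩
  set A₀ := AddCircle (1:ℚ) with hA₀
  set a : A₀ := (((m:ℚ)⁻¹ : ℚ) : A₀) with ha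
  have hma : (m : ℤ) • a = 0 := by
    rw [ha, ← AddCircle.coe_zsmul]
    have h1 : ((m:ℤ) • ((m:ℚ)⁻¹ : ℚ)) = (1:ℚ) := by
      rw [zsmul_eq_mul]
      push_cast
      have hm0 : (m:ℚ) ≠ 0 := by positivity
      field_simp
    rw [h1]
    exact AddCircle.coe_period 1
  have hza : ∀ z : ℤ, z • a = 0 → (m:ℤ) ∣ z := by
    intro z hz
    rw [ha, ← AddCircle.coe_zsmul, AddCircle.coe_eq_zero_iff] at hz
    obtain ⟨w, hw⟩ := hz
    rw [zsmul_eq_mul, zsmul_eq_mul, mul_one] at hw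
    refine ⟨w, ?_⟩
    have hm0 : (m:ℚ) ≠ 0 := by positivity
    have h2 : (z : ℚ) = (m:ℚ) * w := by
      field_simp at hw
      linarith [hw]
    exact_mod_cast h2
  have hdvd_za : ∀ z : ℤ, (m:ℤ) ∣ z → z • a = 0 := by
    rintro z ⟨t, rfl⟩
    rw [mul_comm, mul_zsmul, hma, smul_zero]
  -- y ≠ 0
  have hy0 : y ≠ 0 := by
    intro h0
    have h1 : (1:ℤ) • y ∈ (zsmulHom (G := G) (m:ℤ)).range := by
      rw [h0, smul_zero]
      exact ⟨0, by simp⟩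
    have h2 := Int.le_of_dvd one_pos (hord 1 h1)
    omega
  -- quotient
  set N := (zsmulHom (G := G) (m:ℤ)).range with hN
  set π := QuotientAddGroup.mk' N with hπ
  set ybar := π y with hybar
  have hybar_ord : ∀ k : ℤ, k • ybar = 0 → (m:ℤ) ∣ k := by
    intro k hk
    apply hord
    rw [hybar, ← map_zsmul, QuotientAddGroup.mk'_apply, QuotientAddGroup.eq_zero_iff] at hk
    exact hk
  -- character on the cyclic subgroup, extended to the quotient
  obtain ⟨f₀, hf₀⟩ := hom_on_zmultiples (A := ULift.{u} A₀) ybar (ULift.up a)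
    (fun k hk => by
      apply ULift.ext
      simpa using hdvd_za k (hybar_ord k hk))
  obtain ⟨C, hC⟩ := ext_divisible addCircle_div (AddSubgroup.zmultiples ybar) f₀
  set c' : G →+ A₀ :=
    (AddEquiv.ulift : ULift.{u} A₀ ≃+ A₀).toAddMonoidHom.comp
      (C.comp (QuotientAddGroup.mk' N)) with hc'
  have hc'y : c' y = a := by
    have := hC ⟨ybar, AddSubgroup.mem_zmultiples ybar⟩
    rw [hc']
    simp only [AddMonoidHom.comp_apply]
    rw [← hπ, ← hybar, this, hf₀]
    rfl
  have hc'tor : ∀ g : G, (m:ℤ) • c' g = 0 := by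
    intro g
    rw [← map_zsmul]
    have : ((m:ℤ) • g : G) ∈ N := ⟨g, rfl⟩
    rw [hc']
    simp only [AddMonoidHom.comp_apply, QuotientAddGroup.mk'_apply]
    rw [(QuotientAddGroup.eq_zero_iff _).mpr this]
    simp
  -- ξ : ZMod m →+ A₀
  set ξ : ZMod m →+ A₀ := ZMod.lift m ⟨zmultiplesHom A₀ a, by simpa using hma⟩ with hξ
  have hξcoe : ∀ z : ℤ, ξ (z : ZMod m) = z • a := fun z => ZMod.lift_coe m _ z
  have hξinj : Function.Injective ξ := by
    rw [hξ, ZMod.lift_injective]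
    intro z hz
    have : (m:ℤ) ∣ z := hza z (by simpa using hz)
    exact_mod_cast (ZMod.intCast_zmod_eq_zero_iff_dvd z m).mpr this
  have hrange : ∀ g : G, ∃ k : ZMod m, ξ k = c' g := by
    intro g
    obtain ⟨q, hq⟩ := QuotientAddGroup.mk'_surjective (AddSubgroup.zmultiples (1:ℚ)) (c' g)
    have hq' : ((q : ℚ) : A₀) = c' g := hq
    have := hc'tor g
    rw [← hq', ← AddCircle.coe_zsmul, AddCircle.coe_eq_zero_iff] at this
    obtain ⟨w, hw⟩ := this
    refine ⟨((w : ℤ) : ZMod m), ?_⟩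
    rw [hξcoe, ← hq']
    rw [ha, ← AddCircle.coe_zsmul]
    congr 1
    rw [zsmul_eq_mul, zsmul_eq_mul, mul_one] at hw
    rw [zsmul_eq_mul]
    have hm0 : (m:ℚ) ≠ 0 := by positivity
    push_cast at hw ⊢
    field_simp
    linarith [hw]
  -- c : G →+ ZMod m
  set c : G →+ ZMod m :=
    { toFun := fun g => (hrange g).choose
      map_zero' := hξinj (by rw [(hrange 0).choose_spec, map_zero, map_zero])
      map_add' := fun g₁ g₂ => hξinj (by
        rw [(hrange (g₁ + g₂)).choose_spec, map_add, map_add,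
          (hrange g₁).choose_spec, (hrange g₂).choose_spec]) } with hc
  have hcy : c y = 1 := by
    apply hξinj
    have : ξ (1 : ZMod m) = a := by
      have := hξcoe 1
      simpa using this
    rw [hc]
    show ξ (hrange y).choose = ξ 1
    rw [(hrange y).choose_spec, hc'y, this]
  -- j : ZMod m →+ G
  set j : ZMod m →+ G := ZMod.lift m ⟨zmultiplesHom G y, by simpa using hy⟩ with hj
  have hjy : j 1 = y := by
    have := ZMod.lift_coe m (⟨zmultiplesHom G y, by simpa using hy⟩ :
      {f : ℤ →+ G // f m = 0}) 1
    rw [hj]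
    simp only [Int.cast_one] at this
    rw [this]
    simp
  -- the endomorphism
  set φ : G →+ G := AddMonoidHom.id G - j.comp c with hφ
  have hφy : φ y = 0 := by
    rw [hφ]
    simp only [AddMonoidHom.sub_apply, AddMonoidHom.id_apply, AddMonoidHom.comp_apply]
    rw [hcy, hjy, sub_self]
  have hker : ∀ g : G, c g = 0 → φ g = g := by
    intro g hg
    rw [hφ]
    simp only [AddMonoidHom.sub_apply, AddMonoidHom.id_apply, AddMonoidHom.comp_apply]
    rw [hg, map_zero, sub_zero]
  have hfin : Finite (G ⧸ φ.range) := by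
    have hQfin : Finite (G ⧸ c.ker) :=
      Finite.of_injective _ (QuotientAddGroup.kerLift_injective c)
    have hle : c.ker ≤ (φ.range).comap (AddMonoidHom.id G) := by
      intro g hg
      exact ⟨g, hker g hg⟩
    have hsurj : Function.Surjective
        (QuotientAddGroup.map c.ker φ.range (AddMonoidHom.id G) hle) := by
      intro q
      obtain ⟨g, rfl⟩ := QuotientAddGroup.mk'_surjective φ.range q
      exact ⟨QuotientAddGroup.mk' c.ker g, rfl⟩
    exact Finite.of_surjective _ hsurj
  have hinj : Function.Injective φ := (h φ).mpr hfin
  exact hy0 (hinj (by rw [hφy, map_zero]))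

end StarCase

section NonStar

variable {G : Type u} [AddCommGroup G]

lemma nonstar_case (h : FiniteInjectiveRank G) (p : ℕ) (hp : p.Prime) (x : G) (hx0 : x ≠ 0)
    (hpx : (p : ℤ) • x = 0)
    (hns : ∀ m : ℕ, 1 < m → ∀ y : G, (m:ℤ) • y = 0 →
      ∃ k : ℤ, (∃ w : G, (m:ℤ) • w = k • y) ∧ ¬ (m:ℤ) ∣ k) : False := by
  have hp1 : 1 < p := hp.one_lt
  set P : ℤ := (p : ℤ) with hP
  have cst : ∀ e : ℕ, ((p^e : ℕ) : ℤ) = P ^ e := fun e => by push_cast; rfl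
  -- Step B : order-p elements are divisible by arbitrary powers of p
  have stepB : ∀ N : ℕ, ∀ z : G, P • z = 0 → ∃ w : G, P ^ N • w = z := by
    intro N
    induction N with
    | zero => intro z _; exact ⟨z, by simp⟩
    | succ N IH =>
      intro z hz
      obtain ⟨g, hg⟩ := IH z hz
      have hm1 : 1 < p ^ (N+1) := Nat.one_lt_pow (Nat.succ_ne_zero N) hp1
      have hmg : P ^ (N+1) • g = 0 := by
        rw [pow_succ', mul_smul, hg, hz]
      obtain ⟨k, ⟨w, hw⟩, hk⟩ := hns (p^(N+1)) hm1 g (by rw [cst]; exact hmg)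
      rw [cst] at hw hk
      have hk0 : k ≠ 0 := by rintro rfl; exact hk (dvd_zero _)
      have hk0' : k.natAbs ≠ 0 := Int.natAbs_ne_zero.mpr hk0
      set j := k.natAbs.factorization p with hj
      have hjN : j ≤ N := by
        by_contra hjN
        push_neg at hjN
        have h1 : p ^ (N+1) ∣ k.natAbs :=
          dvd_trans (pow_dvd_pow p hjN) (Nat.ordProj_dvd k.natAbs p)
        have h2 : ((p^(N+1) : ℕ) : ℤ) ∣ (k.natAbs : ℤ) := Int.natCast_dvd_natCast.mpr h1
        rw [cst] at h2
        exact hk (h2.trans (Int.natAbs_dvd.mpr dvd_rfl))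
      set u := k.natAbs / p ^ j with hu
      have hku : k.natAbs = p ^ j * u := (Nat.ordProj_mul_ordCompl_eq_self k.natAbs p).symm
      have hpu : ¬ p ∣ u := Nat.not_dvd_ordCompl hp hk0'
      set U : ℤ := (u : ℤ) with hU
      set K : ℤ := (k.natAbs : ℤ) with hK
      have hKU : K = P ^ j * U := by rw [hK, hku]; push_cast; rfl
      -- K • g is also in the image of P^(N+1)
      obtain ⟨w', hw'⟩ : ∃ w' : G, P ^ (N+1) • w' = K • g := by
        rcases Int.natAbs_eq k with he | he
        · exact ⟨w, by rw [← hK] at he; rw [hw, he]⟩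
        · refine ⟨-w, ?_⟩
          rw [← hK] at he
          rw [smul_neg, hw, he, neg_smul, neg_neg]
      -- Bezout : u is invertible modulo p^(N+1)
      have hcop : Nat.Coprime u (p ^ (N+1)) :=
        Nat.Coprime.pow_right _ ((Nat.Prime.coprime_iff_not_dvd hp).mpr hpu).symm
      have hicop : IsCoprime U (P ^ (N+1)) := by
        have h1 : IsCoprime U ((p^(N+1):ℕ):ℤ) := Int.isCoprime_iff_gcd_eq_one.mpr
          (by rw [Int.gcd_natCast_natCast]; exact hcop)
        rwa [cst] at h1
      obtain ⟨α, β, hab⟩ := hicop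
      -- P^j • g is in the image of P^(N+1)
      obtain ⟨w₂, hw₂⟩ : ∃ w₂ : G, P ^ (N+1) • w₂ = P ^ j • g := by
        refine ⟨α • w', ?_⟩
        have e1 : P ^ (N+1) • (α • w') = (α * K) • g := by
          rw [smul_comm, hw', smul_smul]
        rw [e1]
        have e2 : α * K = P ^ j - P ^ j * β * P^(N+1) := by
          rw [hKU]; linear_combination (P^j : ℤ) * hab
        rw [e2, sub_smul, mul_smul, hmg, smul_zero, sub_zero]
      refine ⟨P ^ (N - j) • w₂, ?_⟩
      rw [smul_smul, ← pow_add]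
      have e3 : N + 1 + (N - j) = (N - j) + (N + 1) := by ring
      rw [e3, pow_add, mul_smul, hw₂, smul_smul, ← pow_add]
      have e4 : N - j + j = N := Nat.sub_add_cancel hjN
      rw [e4, hg]
  -- Step C : p-power torsion elements are divisible by arbitrary powers of p
  have stepC : ∀ e : ℕ, ∀ z : G, P ^ e • z = 0 → ∀ N : ℕ, ∃ w : G, P ^ N • w = z := by
    intro e
    induction e with
    | zero =>
      intro z hz N
      simp only [pow_zero, one_smul] at hz
      exact ⟨0, by rw [hz, smul_zero]⟩
    | succ e IH =>
      intro z hz N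
      have hz' : P ^ e • (P • z) = 0 := by
        rw [smul_smul, ← pow_succ, hz]
      obtain ⟨w, hw⟩ := IH (P • z) hz' (N + 1)
      have hzw : P • (z - P ^ N • w) = 0 := by
        rw [smul_sub, smul_smul, ← pow_succ', hw]
        simp
      obtain ⟨w', hw'⟩ := stepB N _ hzw
      exact ⟨w' + w, by rw [smul_add, hw', sub_add_cancel]⟩
  -- the p-primary torsion subgroup
  set T : AddSubgroup G :=
    { carrier := {t : G | ∃ e : ℕ, P ^ e • t = 0}
      zero_mem' := ⟨0, smul_zero _⟩
      add_mem' := by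
        rintro a b ⟨e₁, he₁⟩ ⟨e₂, he₂⟩
        refine ⟨e₁ + e₂, ?_⟩
        have ha : P ^ (e₁ + e₂) • a = 0 := by
          rw [add_comm e₁ e₂, pow_add, mul_smul, he₁, smul_zero]
        have hb : P ^ (e₁ + e₂) • b = 0 := by
          rw [pow_add, mul_smul, he₂, smul_zero]
        rw [smul_add, ha, hb, add_zero]
      neg_mem' := by
        rintro a ⟨e, he⟩
        exact ⟨e, by rw [smul_neg, he, neg_zero]⟩ } with hT
  have hxT : x ∈ T := ⟨1, by rw [pow_one]; exact hpx⟩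
  -- T is divisible
  have Tdiv_p : ∀ t : T, ∃ s : T, P • s = t := by
    rintro ⟨t, e, he⟩
    obtain ⟨w, hw⟩ : ∃ w : G, P ^ 1 • w = t := stepC e t he 1
    rw [pow_one] at hw
    have hwT : w ∈ T := ⟨e + 1, by
      rw [pow_succ, mul_smul, hw, he]⟩
    exact ⟨⟨w, hwT⟩, by
      apply Subtype.ext
      simpa using hw⟩
  have Tdiv_ppow : ∀ a : ℕ, ∀ t : T, ∃ s : T, P ^ a • s = t := by
    intro a
    induction a with
    | zero => intro t; exact ⟨t, by simp⟩
    | succ a IH =>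
      intro t
      obtain ⟨s, hs⟩ := Tdiv_p t
      obtain ⟨s', hs'⟩ := IH s
      exact ⟨s', by rw [pow_succ', mul_smul, hs', hs]⟩
  have Tdiv_nat : ∀ n : ℕ, n ≠ 0 → ∀ t : T, ∃ s : T, (n:ℤ) • s = t := by
    intro n hn t
    obtain ⟨t', e, he'⟩ := t
    set a := n.factorization p with ha
    set v := n / p ^ a with hv
    have hnv : n = p ^ a * v := (Nat.ordProj_mul_ordCompl_eq_self n p).symm
    have hpv : ¬ p ∣ v := Nat.not_dvd_ordCompl hp hn
    have hcop : Nat.Coprime v (p ^ e) :=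
      Nat.Coprime.pow_right _ ((Nat.Prime.coprime_iff_not_dvd hp).mpr hpv).symm
    have hicop : IsCoprime ((v:ℕ) : ℤ) (P ^ e) := by
      have h1 : IsCoprime ((v:ℕ):ℤ) ((p^e:ℕ):ℤ) := Int.isCoprime_iff_gcd_eq_one.mpr
        (by rw [Int.gcd_natCast_natCast]; exact hcop)
      rwa [cst] at h1
    obtain ⟨α, β, hab⟩ := hicop
    -- first solve v • s₁ = t
    set t₀ : T := ⟨t', e, he'⟩ with ht₀
    have heT : P ^ e • t₀ = 0 := by
      apply Subtype.ext
      simpa using he'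
    set s₁ : T := α • t₀ with hs₁
    have hvs₁ : (v : ℤ) • s₁ = t₀ := by
      rw [hs₁, smul_smul]
      have : (v:ℤ) * α = 1 - β * P ^ e := by linear_combination hab
      rw [this, sub_smul, one_smul, mul_smul, heT, smul_zero, sub_zero]
    obtain ⟨s₂, hs₂⟩ := Tdiv_ppow a s₁
    refine ⟨s₂, ?_⟩
    have : (n : ℤ) = (v : ℤ) * P ^ a := by
      rw [hnv]; push_cast; ring
    rw [this, mul_smul, hs₂, hvs₁]
  have Tdiv : ∀ n : ℤ, n ≠ 0 → ∀ t : T, ∃ s : T, n • s = t := by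
    intro n hn t
    rcases Int.natAbs_eq n with he | he
    · obtain ⟨s, hs⟩ := Tdiv_nat n.natAbs (Int.natAbs_ne_zero.mpr hn) t
      exact ⟨s, by rw [he]; exact hs⟩
    · obtain ⟨s, hs⟩ := Tdiv_nat n.natAbs (Int.natAbs_ne_zero.mpr hn) t
      exact ⟨-s, by rw [he, neg_smul, smul_neg, neg_neg]; exact hs⟩
  -- retraction onto T
  obtain ⟨r, hr⟩ := ext_divisible Tdiv T (AddMonoidHom.id T)
  -- the endomorphism ψ
  set ψ : G →+ G := AddMonoidHom.mk' (fun g => g + (P - 1) • ((r g : T) : G))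
    (fun a b => by
      show a + b + (P - 1) • ((r (a + b) : T) : G) = _
      rw [map_add]
      push_cast
      rw [smul_add]
      abel) with hψ
  have hψx : ψ x = 0 := by
    have hrx : r x = ⟨x, hxT⟩ := hr ⟨x, hxT⟩
    rw [hψ]
    simp only [AddMonoidHom.mk'_apply]
    rw [hrx]
    show x + (P - 1) • x = 0
    rw [sub_smul, one_smul]
    have : P • x = 0 := hpx
    rw [← this]
    abel
  have hψsurj : Function.Surjective ψ := by
    intro g
    obtain ⟨s, hs⟩ := Tdiv_p (r g)
    refine ⟨g - ((r g : T) : G) + ((s : T) : G), ?_⟩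
    rw [hψ]
    simp only [AddMonoidHom.mk'_apply]
    have hr' : ∀ t : T, r ((t : T) : G) = t := fun t => hr t
    have hrg : r (g - ((r g : T) : G) + ((s : T) : G)) = s := by
      simp only [map_add, map_sub, hr']
      abel
    rw [hrg]
    have hPs : P • ((s : T) : G) = ((r g : T) : G) := by
      have := congrArg (fun t : T => (t : G)) hs
      simpa using this
    rw [sub_smul, one_smul, hPs]
    abel
  have hsub : Subsingleton (G ⧸ ψ.range) := by
    have hma : ∀ g : G, QuotientAddGroup.mk' ψ.range g = 0 := fun g => by
      rw [QuotientAddGroup.mk'_apply, QuotientAddGroup.eq_zero_iff]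
      exact hψsurj g
    constructor
    intro a b
    obtain ⟨ga, rfl⟩ := QuotientAddGroup.mk'_surjective ψ.range a
    obtain ⟨gb, rfl⟩ := QuotientAddGroup.mk'_surjective ψ.range b
    rw [hma, hma]
  have hfin : Finite (G ⧸ ψ.range) := Finite.of_subsingleton
  have hinj := (h ψ).mpr hfin
  exact hx0 (hinj (by rw [hψx, map_zero]))

end NonStar

section TorsionFree

variable {G : Type u} [AddCommGroup G]

lemma torsion_free_of_fir (h : FiniteInjectiveRank G) :
    ∀ n : ℤ, n ≠ 0 → ∀ x : G, n • x = 0 → x = 0 := by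
  intro n hn x hnx
  by_contra hx0
  -- x has finite additive order
  have hfin : IsOfFinAddOrder x := by
    rw [isOfFinAddOrder_iff_nsmul_eq_zero]
    refine ⟨n.natAbs, Int.natAbs_pos.mpr hn, ?_⟩
    have : ((n.natAbs : ℤ)) • x = 0 := by
      rcases Int.natAbs_eq n with he | he
      · rw [← he]; exact hnx
      · rw [← neg_neg ((n.natAbs : ℤ)), ← he, neg_smul, hnx, neg_zero]
    rwa [natCast_zsmul] at this
  set o := addOrderOf x with ho
  have ho0 : 0 < o := hfin.addOrderOf_pos
  have ho1 : o ≠ 1 := by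
    intro h1
    exact hx0 (AddMonoid.addOrderOf_eq_one_iff.mp h1)
  set q := o.minFac with hqdef
  have hq : q.Prime := Nat.minFac_prime ho1
  set x' := (o / q) • x with hx'
  have hq_dvd : q ∣ o := Nat.minFac_dvd o
  have hx'0 : x' ≠ 0 := by
    intro h0
    have hdvd : o ∣ (o / q) := addOrderOf_dvd_iff_nsmul_eq_zero.mpr h0
    have hlt : o / q < o := Nat.div_lt_self ho0 hq.one_lt
    have hpos : 0 < o / q := Nat.div_pos (Nat.minFac_le ho0) hq.pos
    exact absurd (Nat.le_of_dvd hpos hdvd) (not_le.mpr hlt)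
  have hqx' : (q : ℤ) • x' = 0 := by
    have h1 : q • x' = o • x := by
      rw [hx', smul_smul, Nat.mul_div_cancel' hq_dvd]
    have h2 : o • x = 0 := addOrderOf_nsmul_eq_zero x
    rw [natCast_zsmul, h1, h2]
  by_cases hstar : ∃ m : ℕ, 1 < m ∧ ∃ y : G, (m:ℤ) • y = 0 ∧
      (∀ k : ℤ, k • y ∈ (zsmulHom (G := G) (m:ℤ)).range → (m:ℤ) ∣ k)
  · obtain ⟨m, hm, y, hy, hord⟩ := hstar
    exact star_case h m hm y hy hord
  · push_neg at hstar
    refine nonstar_case h q hq x' hx'0 hqx' ?_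
    intro m hm y hy
    obtain ⟨k, hk1, hk2⟩ := hstar m hm y hy
    exact ⟨k, hk1, hk2⟩

end TorsionFree

section Blocks

variable {G : Type u} [AddCommGroup G]

/-- a group with divisible element supply is co-finitely Hopfian -/
lemma div_imp_cfh (hdiv : ∀ n : ℕ, 0 < n → ∀ x : G, ∃ y : G, n • y = x)
    (φ : G →+ G) (hfin : Finite (G ⧸ φ.range)) : Function.Surjective φ := by
  have hQdiv : ∀ n : ℕ, 0 < n → ∀ a : G ⧸ φ.range, ∃ b, n • b = a := by
    intro n hn a
    obtain ⟨g, rfl⟩ := QuotientAddGroup.mk'_surjective _ a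
    obtain ⟨y, hy⟩ := hdiv n hn g
    exact ⟨QuotientAddGroup.mk' _ y, by rw [← map_nsmul, hy]⟩
  have hcard : 0 < Nat.card (G ⧸ φ.range) := Nat.card_pos
  have hzero : ∀ a : G ⧸ φ.range, a = 0 := by
    intro a
    obtain ⟨b, hb⟩ := hQdiv (Nat.card (G ⧸ φ.range)) hcard a
    rw [← hb, card_nsmul_eq_zero']
  intro g
  have := hzero (QuotientAddGroup.mk' φ.range g)
  rw [QuotientAddGroup.mk'_apply, QuotientAddGroup.eq_zero_iff] at this
  exact this

end Blocks

section Iota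

open TensorProduct

variable {G : Type u} [AddCommGroup G]

/-- divisible torsion-free G maps isomorphically onto ℚ ⊗ G -/
lemma iota_bijective (htf : ∀ n : ℤ, n ≠ 0 → ∀ x : G, n • x = 0 → x = 0)
    (hdiv : ∀ n : ℕ, 0 < n → ∀ x : G, ∃ y : G, n • y = x) :
    ∃ e : G ≃+ (ℚ ⊗[ℤ] G), ∀ g : G, e g = (1:ℚ) ⊗ₜ[ℤ] g := by
  set ι : G →+ ℚ ⊗[ℤ] G := ((TensorProduct.mk ℤ ℚ G) 1).toAddMonoidHom with hι
  have hιapp : ∀ g : G, ι g = (1:ℚ) ⊗ₜ[ℤ] g := fun g => rfl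
  have hinj : Function.Injective ι := by
    rw [injective_iff_map_eq_zero]
    intro g hg
    by_contra hg0
    -- construct a character G →+ ℚ with value 1 at g
    obtain ⟨f₀, hf₀⟩ := hom_on_zmultiples (A := ULift.{u} ℚ) g (ULift.up (1:ℚ))
      (fun k hk => by
        rcases eq_or_ne k 0 with rfl | hk0
        · simp
        · exact absurd (htf k hk0 g hk) hg0)
    obtain ⟨F, hF⟩ := ext_divisible (Q := ULift.{u} ℚ)
      (fun n hn q => ⟨(ULift.up (q.down / (n:ℚ)) : ULift.{u} ℚ), by
        apply ULift.ext
        have hn' : (n:ℚ) ≠ 0 := Int.cast_ne_zero.mpr hn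
        show n • (q.down / (n:ℚ)) = q.down
        rw [zsmul_eq_mul]
        field_simp⟩)
      (AddSubgroup.zmultiples g) f₀
    set f : G →+ ℚ := (AddEquiv.ulift : ULift.{u} ℚ ≃+ ℚ).toAddMonoidHom.comp F with hf
    have hfg : f g = 1 := by
      have h1 := hF ⟨g, AddSubgroup.mem_zmultiples g⟩
      rw [hf]
      simp only [AddMonoidHom.comp_apply]
      rw [h1, hf₀]
      rfl
    -- the induced map on the tensor product
    set B : ℚ →ₗ[ℤ] G →ₗ[ℤ] ℚ := LinearMap.mk₂ ℤ (fun q x => q * f x)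
      (fun q₁ q₂ x => by show _ * _ = _ * _ + _ * _; rw [add_mul])
      (fun c q x => by show _ * _ = c • (_ * _); rw [zsmul_eq_mul, zsmul_eq_mul]; ring)
      (fun q x₁ x₂ => by show _ * _ = _ * _ + _ * _; rw [map_add, mul_add])
      (fun c q x => by
        show q * f (c • x) = c • (q * f x)
        rw [map_zsmul, zsmul_eq_mul, zsmul_eq_mul]; ring) with hB
    set L : ℚ ⊗[ℤ] G →ₗ[ℤ] ℚ := TensorProduct.lift B with hL
    have : TensorProduct.lift B ((1:ℚ) ⊗ₜ[ℤ] g) = 1 := by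
      simp only [TensorProduct.lift.tmul]
      rw [hB]
      simp only [LinearMap.mk₂_apply]
      rw [hfg, mul_one]
    rw [← hιapp, hg, map_zero] at this
    exact one_ne_zero this.symm
  have hsurj : Function.Surjective ι := by
    intro v
    induction v using TensorProduct.induction_on with
    | zero => exact ⟨0, map_zero ι⟩
    | tmul q g =>
      obtain ⟨y, hy⟩ := hdiv q.den q.den_pos g
      refine ⟨q.num • y, ?_⟩
      rw [hιapp]
      have h1 : (1:ℚ) ⊗ₜ[ℤ] (q.num • y) = ((q.num : ℚ)) ⊗ₜ[ℤ] y := by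
        rw [tmul_smul, smul_tmul', zsmul_eq_mul, mul_one]
      have h2 : q ⊗ₜ[ℤ] g = ((q * q.den : ℚ)) ⊗ₜ[ℤ] y := by
        rw [← hy, ← natCast_zsmul, tmul_smul, smul_tmul', zsmul_eq_mul]
        congr 1
        push_cast
        ring
      rw [h1, h2]
      congr 1
      rw [Rat.mul_den_eq_num]
    | add v₁ v₂ ih₁ ih₂ =>
      obtain ⟨a, ha⟩ := ih₁
      obtain ⟨b, hb⟩ := ih₂
      exact ⟨a + b, by rw [map_add, ha, hb]⟩
  exact ⟨AddEquiv.ofBijective ι ⟨hinj, hsurj⟩, hιapp⟩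

end Iota

section Rank

variable {G : Type u} [AddCommGroup G]

lemma fir_rank_lt {V : Type u} [AddCommGroup V] [Module ℚ V]
    (h : FiniteInjectiveRank G) (e : G ≃+ V) : Module.rank ℚ V < Cardinal.aleph0 := by
  by_contra hr
  push_neg at hr
  set b := Module.Free.chooseBasis ℚ V with hb
  set I := Module.Free.ChooseBasisIndex ℚ V with hI
  have hrank : Module.rank ℚ V = Cardinal.mk I :=
    Module.Free.rank_eq_card_chooseBasisIndex ℚ V
  have hinf : Infinite I := Cardinal.infinite_iff.mpr (hrank ▸ hr)
  obtain ⟨eq⟩ : Nonempty (Option I ≃ I) := by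
    rw [← Cardinal.eq, Cardinal.mk_option]
    exact Cardinal.add_one_eq (Cardinal.infinite_iff.mp hinf)
  set b' : Module.Basis (Option I) ℚ V := b.reindex eq.symm with hb'
  set F : Option I → Option I := fun o => some (eq o) with hF
  have hFinj : Function.Injective F := fun o₁ o₂ h12 =>
    eq.injective (Option.some_injective I h12)
  have hFnone : none ∉ Set.range F := by
    rintro ⟨o, ho⟩
    simp [hF] at ho
  set φL : V →ₗ[ℚ] V :=
    (b'.repr.symm.toLinearMap.comp ((Finsupp.lmapDomain ℚ ℚ F).comp
      b'.repr.toLinearMap)) with hφL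
  have hφapp : ∀ v : V, φL v = b'.repr.symm (Finsupp.mapDomain F (b'.repr v)) :=
    fun v => rfl
  have hφinj : Function.Injective φL := by
    intro v₁ v₂ h12
    rw [hφapp, hφapp] at h12
    have := b'.repr.symm.injective h12
    have := Finsupp.mapDomain_injective hFinj this
    exact b'.repr.injective this
  set ψL : V →ₗ[ℚ] ℚ := (Finsupp.lapply none).comp b'.repr.toLinearMap with hψL
  have hψφ : ∀ v : V, ψL (φL v) = 0 := by
    intro v
    rw [hφapp]
    show (b'.repr (b'.repr.symm (Finsupp.mapDomain F (b'.repr v)))) none = 0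
    rw [b'.repr.apply_symm_apply]
    exact Finsupp.mapDomain_notin_range _ _ hFnone
  have hψsurj : ∀ q : ℚ, ψL (q • b' none) = q := by
    intro q
    show (b'.repr (q • b' none)) none = q
    rw [map_smul, Module.Basis.repr_self]
    simp
  -- transport to G
  set Φ : G →+ G := (e.symm.toAddMonoidHom.comp φL.toAddMonoidHom).comp e.toAddMonoidHom
    with hΦ
  have hΦapp : ∀ g : G, Φ g = e.symm (φL (e g)) := fun g => rfl
  have hΦinj : Function.Injective Φ := by
    intro g₁ g₂ h12
    rw [hΦapp, hΦapp] at h12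
    exact e.injective (hφinj (e.symm.injective h12))
  have hfinG : Finite (G ⧸ Φ.range) := (h Φ).mp hΦinj
  -- build a surjection from the quotient onto ℚ
  have hkill : ∀ g ∈ Φ.range, (ψL.toAddMonoidHom.comp e.toAddMonoidHom) g = 0 := by
    rintro g ⟨g', rfl⟩
    show ψL (e (Φ g')) = 0
    rw [hΦapp, e.apply_symm_apply]
    exact hψφ _
  set χ : G ⧸ Φ.range →+ ℚ :=
    QuotientAddGroup.lift Φ.range (ψL.toAddMonoidHom.comp e.toAddMonoidHom) hkill with hχ
  have hχsurj : Function.Surjective χ := by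
    intro q
    refine ⟨QuotientAddGroup.mk' _ (e.symm (q • b' none)), ?_⟩
    show ψL (e (e.symm (q • b' none))) = q
    rw [e.apply_symm_apply]
    exact hψsurj q
  have : Infinite (G ⧸ Φ.range) := Infinite.of_surjective χ hχsurj
  exact not_finite (G ⧸ Φ.range)

end Rank

/-- For an abelian group `G` of finite injective rank, `G` is co-finitely Hopfian if
and only if `G` is divisible of finite rank (equivalently, since such a `G` is
torsion-free, `G ≅ ℚ ^ n` for some `n < ω`). -/
theorem coFinitelyHopfian_iff_divisible_finiteRank (G : Type*) [AddCommGroup G]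
    (h : FiniteInjectiveRank G) :
    (CoFinitelyHopfian G ↔
      ((∀ n : ℕ, 0 < n → ∀ x : G, ∃ y : G, n • y = x) ∧
        Module.rank ℚ (ℚ ⊗[ℤ] G) < Cardinal.aleph0)) ∧
    (CoFinitelyHopfian G ↔ ∃ n : ℕ, Nonempty (G ≃+ (Fin n → ℚ))) := by
  have h' : FiniteInjectiveRank G := h
  have htf := torsion_free_of_fir h'
  -- CFH → divisible
  have div_of_cfh : CoFinitelyHopfian G → ∀ n : ℕ, 0 < n → ∀ x : G, ∃ y : G, n • y = x := by
    intro hc n hn x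
    set φ : G →+ G := zsmulHom (n : ℤ) with hφ
    have hφinj : Function.Injective φ := by
      intro a b hab
      have h1 : (n:ℤ) • (a - b) = 0 := by
        rw [smul_sub]
        have : (n:ℤ) • a = (n:ℤ) • b := hab
        rw [this, sub_self]
      have h2 : ((n:ℤ)) ≠ 0 := Int.natCast_ne_zero.mpr (by omega : n ≠ 0)
      have := htf (n:ℤ) h2 (a - b) h1
      rwa [sub_eq_zero] at this
    have hfin := (h' φ).mp hφinj
    obtain ⟨y, hy⟩ := hc φ hfin x
    exact ⟨y, by rw [← natCast_zsmul]; exact hy⟩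
  have cfh_of_div : (∀ n : ℕ, 0 < n → ∀ x : G, ∃ y : G, n • y = x) →
      CoFinitelyHopfian G := fun hd φ hfin => div_imp_cfh hd φ hfin
  have div_of_iso : (∃ n : ℕ, Nonempty (G ≃+ (Fin n → ℚ))) →
      (∀ n : ℕ, 0 < n → ∀ x : G, ∃ y : G, n • y = x) := by
    rintro ⟨n, ⟨e⟩⟩ m hm x
    refine ⟨e.symm ((m:ℚ)⁻¹ • e x), ?_⟩
    apply e.injective
    rw [map_nsmul, e.apply_symm_apply, ← Nat.cast_smul_eq_nsmul ℚ, smul_smul,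
      mul_inv_cancel₀ (Nat.cast_ne_zero.mpr (by omega : m ≠ 0)), one_smul]
  constructor
  · constructor
    · intro hc
      have hd := div_of_cfh hc
      obtain ⟨e, -⟩ := iota_bijective htf hd
      exact ⟨hd, fir_rank_lt h' e⟩
    · rintro ⟨hd, -⟩
      exact cfh_of_div hd
  · constructor
    · intro hc
      have hd := div_of_cfh hc
      obtain ⟨e, -⟩ := iota_bijective htf hd
      have hrank := fir_rank_lt h' e
      haveI : Module.Finite ℚ (ℚ ⊗[ℤ] G) := Module.rank_lt_aleph0_iff.mp hrank
      exact ⟨Module.finrank ℚ (ℚ ⊗[ℤ] G),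
        ⟨e.trans (Module.finBasis ℚ (ℚ ⊗[ℤ] G)).equivFun.toAddEquiv⟩⟩
    · intro hiso
      exact cfh_of_div (div_of_iso hiso)
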